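/- (Disjoint occurrence of droplets) For the algorithmic droplet construction on the Duarte model: for every ω ∈ Ω and every k ≠ j, the droplets satisfy D_k(ω) ∩ D_j(ω) = ∅. -/

import Mathlib

open Set

attribute [local instance] Classical.propDecidable

/-- The Duarte update family: 2-subsets of `{-e₁, e₂, -e₂}`. -/
def duarteU : Set (Set (ℤ × ℤ)) :=
  {{(-1, 0), (0, 1)}, {(-1, 0), (0, -1)}, {(0, 1), (0, -1)}}

/-- One step of the `U`-bootstrap process restricted to the volume `Λ`. -/
def bootStepIn (U : Set (Set (ℤ × ℤ))) (Λ Z : Set (ℤ × ℤ)) : Set (ℤ × ℤ) :=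
  Z ∪ {x | x ∈ Λ ∧ ∃ X ∈ U, (fun y => y + x) '' X ⊆ Z}

def bootIterIn (U : Set (Set (ℤ × ℤ))) (Λ Z : Set (ℤ × ℤ)) : ℕ → Set (ℤ × ℤ)
  | 0 => Z
  | t + 1 => bootStepIn U Λ (bootIterIn U Λ Z t)

/-- The closure of `Z` under the `U`-bootstrap process in `Λ`. -/
def bootClosureIn (U : Set (Set (ℤ × ℤ))) (Λ Z : Set (ℤ × ℤ)) : Set (ℤ × ℤ) :=
  ⋃ t, bootIterIn U Λ Z t

/-- The `i`-th column `C_i` of the region `V` (for `1 ≤ i ≤ N`). -/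
def col (N i : ℕ) : Set (ℤ × ℤ) :=
  {p | p.1 = (i : ℤ) - N ∧ |p.2| < (N : ℤ) ^ 2 - ((i : ℤ) - 1) * N}

/-- The augmented column `C̄_i = C_i ∪ ∂_⊥ C_i`. -/
def colBar (N i : ℕ) : Set (ℤ × ℤ) :=
  {p | p.1 = (i : ℤ) - N ∧ |p.2| ≤ (N : ℤ) ^ 2 - ((i : ℤ) - 1) * N}

/-- The region `V = ⋃_{i=1}^N C_i`. -/
def Vreg (N : ℕ) : Set (ℤ × ℤ) := ⋃ i ∈ Finset.Icc 1 N, col N i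

/-- The region `V̄ = ⋃_{i=1}^N C̄_i`. -/
def VregBar (N : ℕ) : Set (ℤ × ℤ) := ⋃ i ∈ Finset.Icc 1 N, colBar N i

/-- `C̄_k` contains a vertical interval of length `ℓ` which is infectable (by
the Duarte bootstrap process in `V` with healthy parallel boundary conditions)
from the empty sites of `σ` in `V̄` after removing all empty vertices in the
columns `C̄_1, …, C̄_{ξ-1}`. -/
def hasInfInterval (N ℓ ξ k : ℕ) (σ : ℤ × ℤ → Bool) : Prop :=
  ∃ j0 : ℤ, ∀ m : ℕ, m < ℓ →
    (((k : ℤ) - N, j0 + m) ∈ colBar N k ∧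
      ((k : ℤ) - N, j0 + m) ∈ bootClosureIn duarteU (Vreg N)
        ({x ∈ VregBar N | σ x = false} \ ⋃ i ∈ Finset.Icc 1 (ξ - 1), colBar N i))

/-- The algorithm of Definition 4.4: scanning the columns from left to right,
at step `k`, if `C̄_k` contains an infectable interval of length `≥ ℓ`, heal
all the columns `C̄_{ξ_k}, …, C̄_k`, where `ξ_k` is the largest `ξ ≤ k` such
that the infectability survives the removal of all empty sites to the left of
column `ξ`. -/
noncomputable def psiAlg (N ℓ : ℕ) (σ0 : ℤ × ℤ → Bool) : ℕ → (ℤ × ℤ → Bool)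
  | 0 => σ0
  | k + 1 =>
    if hasInfInterval N ℓ 1 (k + 1) (psiAlg N ℓ σ0 k) then
      fun x =>
        if x ∈ ⋃ i ∈ Finset.Icc
            (Nat.findGreatest
              (fun ξ => hasInfInterval N ℓ ξ (k + 1) (psiAlg N ℓ σ0 k)) (k + 1))
            (k + 1), colBar N i
        then true else psiAlg N ℓ σ0 k x
    else psiAlg N ℓ σ0 k

/-- The index `ξ_k`. -/
noncomputable def xiAlg (N ℓ : ℕ) (σ0 : ℤ × ℤ → Bool) (k : ℕ) : ℕ :=
  Nat.findGreatest (fun ξ => hasInfInterval N ℓ ξ k (psiAlg N ℓ σ0 (k - 1))) k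

/-- The droplet `D_k(ω)`: empty if `ψ⁽ᵏ⁾ = ψ⁽ᵏ⁻¹⁾`, and `⋃_{i=ξ_k}^k C̄_i`
otherwise. -/
noncomputable def droplet (N ℓ : ℕ) (σ0 : ℤ × ℤ → Bool) (k : ℕ) : Set (ℤ × ℤ) :=
  if psiAlg N ℓ σ0 k = psiAlg N ℓ σ0 (k - 1) then ∅
  else ⋃ i ∈ Finset.Icc (xiAlg N ℓ σ0 k) k, colBar N i

lemma bootIter_mono (U : Set (Set (ℤ × ℤ))) (Λ : Set (ℤ × ℤ)) {Z Z' : Set (ℤ × ℤ)}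
    (h : Z ⊆ Z') (t : ℕ) : bootIterIn U Λ Z t ⊆ bootIterIn U Λ Z' t := by
  induction t with
  | zero => exact h
  | succ t ih =>
    intro x hx
    rcases hx with hx | ⟨hxΛ, X, hX, hsub⟩
    · exact Or.inl (ih hx)
    · exact Or.inr ⟨hxΛ, X, hX, hsub.trans ih⟩

lemma bootClosure_mono (U : Set (Set (ℤ × ℤ))) (Λ : Set (ℤ × ℤ)) {Z Z' : Set (ℤ × ℤ)}
    (h : Z ⊆ Z') : bootClosureIn U Λ Z ⊆ bootClosureIn U Λ Z' := by
  intro x hx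
  obtain ⟨t, ht⟩ := Set.mem_iUnion.mp hx
  exact Set.mem_iUnion.mpr ⟨t, bootIter_mono U Λ h t ht⟩

/-- Infection cannot cross a fully healthy column. -/
lemma cross (Λ Z : Set (ℤ × ℤ)) (c : ℤ) (hZ : ∀ p ∈ Z, p.1 ≠ c) (t : ℕ) :
    (∀ p ∈ bootIterIn duarteU Λ Z t, p.1 ≠ c) ∧
    (∀ p ∈ bootIterIn duarteU Λ Z t, c < p.1 →
      p ∈ bootIterIn duarteU Λ (Z \ {q | q.1 ≤ c}) t) := by
  induction t with
  | zero => exact ⟨hZ, fun p hp hc => ⟨hp, not_le.mpr hc⟩⟩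
  | succ t ih =>
    obtain ⟨ih1, ih2⟩ := ih
    constructor
    · rintro p hp hc
      rcases hp with hp | ⟨hpΛ, X, hX, hsub⟩
      · exact ih1 p hp hc
      · simp only [duarteU, Set.mem_insert_iff, Set.mem_singleton_iff] at hX
        have hud : (((0 : ℤ), (1 : ℤ)) ∈ X) ∨ (((0 : ℤ), (-1 : ℤ)) ∈ X) := by
          rcases hX with rfl | rfl | rfl <;> simp
        rcases hud with h | h
        · exact ih1 _ (hsub ⟨_, h, rfl⟩) (by simp [Prod.fst_add, hc])
        · exact ih1 _ (hsub ⟨_, h, rfl⟩) (by simp [Prod.fst_add, hc])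
    · rintro p hp hc
      rcases hp with hp | ⟨hpΛ, X, hX, hsub⟩
      · exact Or.inl (ih2 p hp hc)
      · refine Or.inr ⟨hpΛ, X, hX, ?_⟩
        rintro q ⟨y, hy, rfl⟩
        have hq : y + p ∈ bootIterIn duarteU Λ Z t := hsub ⟨y, hy, rfl⟩
        simp only [duarteU, Set.mem_insert_iff, Set.mem_singleton_iff] at hX
        have hy1 : y.1 = 0 ∨ y.1 = -1 := by
          rcases hX with rfl | rfl | rfl <;>
            simp only [Set.mem_insert_iff, Set.mem_singleton_iff] at hy <;>
            rcases hy with rfl | rfl <;> simp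
        have e : (y + p).1 = y.1 + p.1 := rfl
        have hne := ih1 _ hq
        have h1 : c < (y + p).1 := by rcases hy1 with h | h <;> omega
        exact ih2 _ hq h1

lemma crossClosure (Λ Z : Set (ℤ × ℤ)) (c : ℤ) (hZ : ∀ p ∈ Z, p.1 ≠ c)
    {p : ℤ × ℤ} (hp : p ∈ bootClosureIn duarteU Λ Z) (hc : c < p.1) :
    p ∈ bootClosureIn duarteU Λ (Z \ {q | q.1 ≤ c}) := by
  obtain ⟨t, ht⟩ := Set.mem_iUnion.mp hp
  exact Set.mem_iUnion.mpr ⟨t, (cross Λ Z c hZ t).2 p ht hc⟩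

/-- `psiAlg` never turns a healthy site empty. -/
lemma psiAlg_mono (N ℓ : ℕ) (σ0 : ℤ × ℤ → Bool) (m : ℕ) (x : ℤ × ℤ)
    (h : psiAlg N ℓ σ0 m x = true) : psiAlg N ℓ σ0 (m + 1) x = true := by
  by_cases hc : hasInfInterval N ℓ 1 (m + 1) (psiAlg N ℓ σ0 m) <;>
    simp only [psiAlg, if_pos, if_neg, hc, if_true, if_false]
  · split <;> simp [h]
  · exact h

/-- If the droplet at step `k` is nonempty then the infectable interval exists
and the whole column `C̄_k` is healed at step `k`. -/
lemma droplet_spec (N ℓ : ℕ) (σ0 : ℤ × ℤ → Bool) (k : ℕ) (hk : 1 ≤ k)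
    (h : psiAlg N ℓ σ0 k ≠ psiAlg N ℓ σ0 (k - 1)) :
    hasInfInterval N ℓ 1 k (psiAlg N ℓ σ0 (k - 1)) ∧
    ∀ x ∈ colBar N k, psiAlg N ℓ σ0 k x = true := by
  obtain ⟨m, rfl⟩ : ∃ m, k = m + 1 := ⟨k - 1, by omega⟩
  simp only [Nat.add_sub_cancel] at h ⊢
  by_cases hc : hasInfInterval N ℓ 1 (m + 1) (psiAlg N ℓ σ0 m)
  · refine ⟨hc, fun x hx => ?_⟩
    simp only [psiAlg, if_pos hc]
    rw [if_pos]
    exact Set.mem_iUnion₂.mpr ⟨m + 1,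
      Finset.mem_Icc.mpr ⟨Nat.findGreatest_le _, le_refl _⟩, hx⟩
  · exact absurd (by simp only [psiAlg, if_neg hc]) h

lemma stmt14_aux (N ℓ : ℕ) (σ0 : ℤ × ℤ → Bool) (k j : ℕ)
    (hk : 1 ≤ k) (hkj : k < j) :
    droplet N ℓ σ0 k ∩ droplet N ℓ σ0 j = ∅ := by
  by_cases hkE : psiAlg N ℓ σ0 k = psiAlg N ℓ σ0 (k - 1)
  · simp [droplet, hkE]
  by_cases hjE : psiAlg N ℓ σ0 j = psiAlg N ℓ σ0 (j - 1)
  · simp [droplet, hjE]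
  obtain ⟨hinfk, hhealk⟩ := droplet_spec N ℓ σ0 k hk hkE
  obtain ⟨hinfj, -⟩ := droplet_spec N ℓ σ0 j (by omega) hjE
  have hheal : ∀ x ∈ colBar N k, psiAlg N ℓ σ0 (j - 1) x = true := by
    intro x hx
    have key : ∀ m, k ≤ m → psiAlg N ℓ σ0 m x = true := by
      intro m hm
      induction m, hm using Nat.le_induction with
      | base => exact hhealk x hx
      | succ m hm ih => exact psiAlg_mono N ℓ σ0 m x ih
    exact key (j - 1) (by omega)
  set σ := psiAlg N ℓ σ0 (j - 1) with hσ
  set Z : Set (ℤ × ℤ) := {x ∈ VregBar N | σ x = false} with hZ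
  have hZc : ∀ p ∈ Z, p.1 ≠ (k : ℤ) - N := by
    rintro p ⟨hpV, hpσ⟩ hpc
    obtain ⟨i, hi, hpcol⟩ := Set.mem_iUnion₂.mp hpV
    obtain ⟨hp1, hp2⟩ := hpcol
    have hik : i = k := by omega
    subst hik
    have := hheal p ⟨hp1, hp2⟩
    rw [this] at hpσ
    exact absurd hpσ (by simp)
  have hinf' : hasInfInterval N ℓ (k + 1) j σ := by
    obtain ⟨j0, hj0⟩ := hinfj
    refine ⟨j0, fun m hm => ?_⟩
    obtain ⟨hcol, hcl⟩ := hj0 m hm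
    refine ⟨hcol, ?_⟩
    have hcl' : ((j : ℤ) - N, j0 + m) ∈ bootClosureIn duarteU (Vreg N) Z := by
      have : (Finset.Icc 1 (1 - 1) : Finset ℕ) = ∅ := by decide
      simpa [this] using hcl
    have h1 := crossClosure (Vreg N) Z ((k : ℤ) - N) hZc hcl'
      (by show (k : ℤ) - N < (j : ℤ) - N; omega)
    refine bootClosure_mono _ _ ?_ h1
    rintro q ⟨hq1, hq2⟩
    refine ⟨hq1, ?_⟩
    intro hqU
    obtain ⟨i, hi, hqc⟩ := Set.mem_iUnion₂.mp hqU
    have hik : i ≤ (k + 1) - 1 := (Finset.mem_Icc.mp hi).2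
    have hq1' := hqc.1
    exact hq2 (by simp only [Set.mem_setOf_eq]; omega)
  have hxi : k + 1 ≤ xiAlg N ℓ σ0 j := Nat.le_findGreatest hkj hinf'
  ext p
  simp only [droplet, if_neg hkE, if_neg hjE, Set.mem_inter_iff,
    Set.mem_empty_iff_false, iff_false, not_and]
  intro hp1 hp2
  obtain ⟨i1, hi1, hc1⟩ := Set.mem_iUnion₂.mp hp1
  obtain ⟨i2, hi2, hc2⟩ := Set.mem_iUnion₂.mp (show p ∈ ⋃ i ∈ Finset.Icc (xiAlg N ℓ σ0 j) j, colBar N i by rwa [if_neg (show ¬ psiAlg N ℓ σ0 j = psiAlg N ℓ σ0 (j - 1) from hjE)] at hp2)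
  have e1 := hc1.1
  have e2 := hc2.1
  have hi1k : i1 ≤ k := (Finset.mem_Icc.mp hi1).2
  have hi2k : k + 1 ≤ i2 := le_trans hxi (Finset.mem_Icc.mp hi2).1
  omega

/-- Disjoint occurrence of the droplets: for every configuration `ω` and all
`k ≠ j`, `D_k(ω) ∩ D_j(ω) = ∅`. -/
theorem stmt14 (N ℓ : ℕ) (σ0 : ℤ × ℤ → Bool) (k j : ℕ)
    (hk : 1 ≤ k) (hkN : k ≤ N) (hj : 1 ≤ j) (hjN : j ≤ N) (hkj : k ≠ j) :
    droplet N ℓ σ0 k ∩ droplet N ℓ σ0 j = ∅ := by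
  rcases lt_or_gt_of_ne hkj with h | h
  · exact stmt14_aux N ℓ σ0 k j hk h
  · rw [Set.inter_comm]
    exact stmt14_aux N ℓ σ0 j k hj h
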